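/- arXiv:2204.08186 — 2 statements merged into one kernel-verified Lean document; each statement's English description precedes it below -/
import Mathlib

section
/- Let b be a nondegenerate bilinear form on ℝⁿ. If (A^{⋆L})^{⋆L} = A holds for all linear endomorphisms A of ℝⁿ, then b is symmetric or skew-symmetric; conversely, if b is symmetric or skew-symmetric, then (A^{⋆L})^{⋆L} = A for all A. -/
theorem left_adjoint_involution_iff_symm_or_skew (n : ℕ)
    (b : LinearMap.BilinForm ℝ (EuclideanSpace ℝ (Fin n)))
    (hb : b.Nondegenerate) :
    (∀ A AL ALL : EuclideanSpace ℝ (Fin n) →ₗ[ℝ] EuclideanSpace ℝ (Fin n),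
        (∀ x y, b (AL x) y = b x (A y)) →
        (∀ x y, b (ALL x) y = b x (AL y)) → ALL = A) ↔
      ((∀ x y, b x y = b y x) ∨ (∀ x y, b x y = - b y x)) := by
  constructor
  · intro H
    -- transpose operator T : b (T x) v = b v x
    set T : EuclideanSpace ℝ (Fin n) →ₗ[ℝ] EuclideanSpace ℝ (Fin n) :=
      (b.toDual hb).symm.toLinearMap ∘ₗ b.flip with hTdef
    have hT : ∀ x v, b (T x) v = b v x := by
      intro x v
      simp only [hTdef, LinearMap.comp_apply, LinearEquiv.coe_coe]
      rw [LinearMap.BilinForm.apply_toDual_symm_apply]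
      simp
    -- key identity
    have key : ∀ x y z : EuclideanSpace ℝ (Fin n), b z y • T x = b y z • x := by
      intro x y z
      have h := H ((b y).smulRight x) ((b.flip x).smulRight y) ((b.flip y).smulRight (T x))
        (by intro u v; simp [mul_comm])
        (by intro u v; simp [hT, mul_comm])
      simpa using LinearMap.congr_fun h z
    by_cases hzero : ∀ y z : EuclideanSpace ℝ (Fin n), b y z = 0
    · left; intro x y; rw [hzero x y, hzero y x]
    · push_neg at hzero
      obtain ⟨y, z, hyz⟩ := hzero
      -- T is scalar multiplication by c
      set c : ℝ := b z y / b y z with hc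
      have hTscal : ∀ x, T x = c • x := by
        intro x
        have h := key x z y
        have : T x = (b y z)⁻¹ • (b z y • x) := by
          rw [← h]; rw [smul_smul, inv_mul_cancel₀ hyz, one_smul]
        rw [this, smul_smul, hc]; ring_nf
      have hrel : ∀ v x : EuclideanSpace ℝ (Fin n), b v x = c * b x v := by
        intro v x
        have := hT x v
        rw [hTscal x] at this
        simpa using this.symm
      have hc2 : c * c = 1 := by
        have h1 := hrel y z
        have h2 := hrel z y
        rw [h2] at h1
        have : (c * c) * b y z = 1 * b y z := by rw [one_mul, mul_assoc]; linarith
        exact mul_right_cancel₀ hyz this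
      rcases mul_self_eq_one_iff.mp hc2 with h | h
      · left; intro x v; have := hrel x v; rw [h] at this; linarith
      · right; intro x v; have := hrel x v; rw [h] at this; linarith
  · rintro (hs | hs) A AL ALL h1 h2
    · apply LinearMap.ext; intro z
      have key : ALL z - A z = 0 := by
        apply hb.1
        intro v
        have : b (ALL z) v = b (A z) v := by
          rw [h2, hs z (AL v), h1, ← hs v (A z)]
        simp [this]
      exact sub_eq_zero.mp key
    · apply LinearMap.ext; intro z
      have key : ALL z - A z = 0 := by
        apply hb.1
        intro v
        have : b (ALL z) v = b (A z) v := by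
          rw [h2, hs z (AL v), h1, hs (A z) v]
        simp [this]
      exact sub_eq_zero.mp key
end

section
/- Let b be a nondegenerate bilinear form on ℝⁿ. Then A^{⋆L} = A^{⋆R} for all linear endomorphisms A of ℝⁿ if and only if b is symmetric or skew-symmetric. -/
theorem left_eq_right_adjoint_iff_symm_or_skew (n : ℕ)
    (b : LinearMap.BilinForm ℝ (EuclideanSpace ℝ (Fin n)))
    (hb : b.Nondegenerate) :
    (∀ A AL AR : EuclideanSpace ℝ (Fin n) →ₗ[ℝ] EuclideanSpace ℝ (Fin n),
        (∀ x y, b (AL x) y = b x (A y)) →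
        (∀ x y, b (A x) y = b x (AR y)) → AL = AR) ↔
      ((∀ x y, b x y = b y x) ∨ (∀ x y, b x y = - b y x)) := by
  constructor
  · intro H
    by_cases hz : ∀ x y, b x y = 0
    · left; intro x y; rw [hz, hz]
    push_neg at hz
    obtain ⟨u₀, v₀, huv⟩ := hz
    have hflip : b.flip.Nondegenerate := hb.flip
    -- χ x satisfies ∀ w, b w (χ x) = b x w
    set χ : EuclideanSpace ℝ (Fin n) →ₗ[ℝ] EuclideanSpace ℝ (Fin n) :=
      (b.flip.toDual hflip).symm.toLinearMap ∘ₗ b with hχdef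
    have hχ : ∀ x w, b w (χ x) = b x w := by
      intro x w
      have : b.flip (χ x) w = b x w := by
        simp [hχdef]
      simpa using this
    -- key identity from the hypothesis applied to rank-one maps
    have key : ∀ x u v : EuclideanSpace ℝ (Fin n),
        b v u • x = b u v • χ x := by
      intro x u v
      have := H ((b x).smulRight u) ((b.flip u).smulRight x) ((b u).smulRight (χ x))
        (by intro p q; simp [mul_comm])
        (by intro p q; simp only [LinearMap.smulRight_apply, map_smul, LinearMap.smul_apply,
              smul_eq_mul, hχ x p]; ring)
      have := congrFun (congrArg (fun f => f.toFun) this) v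
      simpa using this
    set c : ℝ := b v₀ u₀ / b u₀ v₀ with hc
    have hχx : ∀ x, χ x = c • x := by
      intro x
      have h := key x u₀ v₀
      have : χ x = (b u₀ v₀)⁻¹ • (b v₀ u₀ • x) := by
        rw [h, smul_smul, inv_mul_cancel₀ huv, one_smul]
      rw [this, smul_smul, hc]
      ring_nf
    have hcb : ∀ x w, c * b w x = b x w := by
      intro x w
      have := hχ x w
      rw [hχx x] at this
      simpa [mul_comm] using this
    have hc2 : c * c = 1 := by
      have h1 := hcb v₀ u₀
      have h2 := hcb u₀ v₀
      have h3 : (c * c) * b u₀ v₀ = 1 * b u₀ v₀ := by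
        rw [one_mul, mul_assoc, h1]; exact h2
      exact mul_right_cancel₀ huv h3
    rcases mul_self_eq_one_iff.mp hc2 with h1 | h1
    · left; intro x y; have := hcb x y; rw [h1, one_mul] at this; exact this.symm
    · right; intro x y; have := hcb x y; rw [h1] at this; linarith
  · intro H A AL AR hL hR
    apply LinearMap.ext
    intro x
    have h0 : ∀ y, b (AL x - AR x) y = 0 := by
      intro y
      simp only [map_sub, LinearMap.sub_apply]
      rcases H with hs | hk
      · linarith [hL x y, hs x (A y), hR y x, hs (AR x) y]
      · linarith [hL x y, hk x (A y), hR y x, hk (AR x) y]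
    exact sub_eq_zero.mp (hb.1 _ h0)
end
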